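/- Let ξ > 0 and let X₁, …, X_n be independent and identically distributed random variables with the Pareto distribution P(X_i > x) = x^{−1/ξ} for x ≥ 1. Denote by X^{(1,n)} ≥ X^{(2,n)} ≥ … ≥ X^{(n,n)} the decreasing order statistics of the sample. For integers 0 ≤ k₀ < k < n − 1, define the optimally weighted trimmed Hill estimator ξ̂^{trim}_{k₀,k,n} = ((k₀+1)/(k−k₀)) · ln( X^{(k₀+1,n)} / X^{(k+1,n)} ) + (1/(k−k₀)) · Σ_{i=k₀+2}^{k} ln( X^{(i,n)} / X^{(k+1,n)} ). Then ξ̂^{trim}_{k₀,k,n} is an unbiased estimator of ξ: E[ ξ̂^{trim}_{k₀,k,n} ] = ξ. -/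

import Mathlib

open MeasureTheory Filter Set ProbabilityTheory Finset
open scoped ENNReal


section TrimmedHillAux


lemma order_stat_gt_iff {Ω : Type*} {n : ℕ} (X Y : Fin n → Ω → ℝ)
    (hperm : ∀ ω, ∃ σ : Equiv.Perm (Fin n), ∀ i, Y i ω = X (σ i) ω)
    (hsorted : ∀ ω, ∀ i j : Fin n, i ≤ j → Y j ω ≤ Y i ω)
    (ω : Ω) (y : ℝ) (j : Fin n) :
    (y < Y j ω ↔ (j : ℕ) + 1 ≤ (Finset.univ.filter (fun i => y < X i ω)).card) := by
  obtain ⟨σ, hσ⟩ := hperm ω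
  have hcard : (Finset.univ.filter (fun i => y < Y i ω)).card
      = (Finset.univ.filter (fun i => y < X i ω)).card := by
    apply Finset.card_bij (fun i _ => σ i)
    · intro a ha
      simp only [Finset.mem_filter, Finset.mem_univ, true_and] at ha ⊢
      rwa [← hσ a]
    · intro a _ b _ hab
      exact σ.injective hab
    · intro b hb
      refine ⟨σ.symm b, ?_, by simp⟩
      simp only [Finset.mem_filter, Finset.mem_univ, true_and] at hb ⊢
      rwa [hσ (σ.symm b), Equiv.apply_symm_apply]
  rw [← hcard]
  constructor
  · intro h
    have hsub : Finset.Iic j ⊆ Finset.univ.filter (fun i => y < Y i ω) := by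
      intro i hi
      simp only [Finset.mem_Iic] at hi
      simp only [Finset.mem_filter, Finset.mem_univ, true_and]
      exact lt_of_lt_of_le h (hsorted ω i j hi)
    calc (j : ℕ) + 1 = (Finset.Iic j).card := (Fin.card_Iic j).symm
      _ ≤ _ := Finset.card_le_card hsub
  · intro h
    by_contra hy
    push_neg at hy
    have hsub : Finset.univ.filter (fun i => y < Y i ω) ⊆ Finset.Iio j := by
      intro i hi
      simp only [Finset.mem_filter, Finset.mem_univ, true_and] at hi
      simp only [Finset.mem_Iio]
      by_contra hij
      push_neg at hij
      exact absurd (lt_of_lt_of_le hi (le_trans (hsorted ω j i hij) hy)) (lt_irrefl y)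
    have := Finset.card_le_card hsub
    rw [Fin.card_Iio] at this
    omega


variable {Ω : Type*} [MeasurableSpace Ω] {μ : Measure Ω} [IsProbabilityMeasure μ]


lemma T_eq_set {n : ℕ} (X : Fin n → Ω → ℝ) (y : ℝ) (s : Finset (Fin n)) :
    {ω | Finset.univ.filter (fun i => y < X i ω) = s}
      = ⋂ i, (if i ∈ s then {ω | y < X i ω} else {ω | y < X i ω}ᶜ) := by
  ext ω
  simp only [Set.mem_setOf_eq, Set.mem_iInter, Finset.ext_iff, Finset.mem_filter,
    Finset.mem_univ, true_and]
  constructor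
  · intro h i
    by_cases hi : i ∈ s <;> simp only [hi, if_true, if_false]
    · exact (h i).2 hi
    · exact fun hlt => hi ((h i).1 hlt)
  · intro h i
    have := h i
    by_cases hi : i ∈ s <;>
      simp only [hi, if_true, if_false, Set.mem_setOf_eq, Set.mem_compl_iff, not_lt] at this
    · exact iff_of_true this hi
    · exact iff_of_false (not_lt.2 this) hi

lemma measurable_T_eq {n : ℕ} (X : Fin n → Ω → ℝ) (hXm : ∀ i, Measurable (X i))
    (y : ℝ) (s : Finset (Fin n)) :
    MeasurableSet {ω | Finset.univ.filter (fun i => y < X i ω) = s} := by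
  rw [T_eq_set]
  refine MeasurableSet.iInter fun i => ?_
  by_cases hi : i ∈ s <;> simp only [hi, if_true, if_false]
  · exact measurableSet_lt measurable_const (hXm i)
  · exact (measurableSet_lt measurable_const (hXm i)).compl

lemma meas_filter_eq {n : ℕ} (X : Fin n → Ω → ℝ) (hXm : ∀ i, Measurable (X i))
    (hindep : iIndepFun X μ)
    (y : ℝ) (p : ℝ≥0∞) (hp : ∀ i, μ {ω | y < X i ω} = p) (s : Finset (Fin n)) :
    μ {ω | Finset.univ.filter (fun i => y < X i ω) = s}
      = p ^ s.card * (1 - p) ^ (n - s.card) := by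
  rw [T_eq_set]
  rw [hindep.meas_iInter (fun i => ?_)]
  · have hterm : ∀ i, μ (if i ∈ s then {ω | y < X i ω} else {ω | y < X i ω}ᶜ)
        = if i ∈ s then p else 1 - p := by
      intro i
      by_cases hi : i ∈ s <;> simp only [hi, if_true, if_false]
      · exact hp i
      · rw [prob_compl_eq_one_sub (measurableSet_lt measurable_const (hXm i)), hp i]
    simp only [hterm]
    rw [Finset.prod_ite, Finset.prod_const, Finset.prod_const]
    congr 2
    · simp [Finset.filter_mem_eq_inter]
    · rw [Finset.filter_not]
      simp only [Finset.filter_mem_eq_inter, Finset.univ_inter]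
      rw [Finset.card_sdiff_of_subset (Finset.subset_univ s)]
      simp
  · by_cases hi : i ∈ s <;> simp only [hi, if_true, if_false]
    · exact ⟨Set.Ioi y, measurableSet_Ioi, rfl⟩
    · refine ⟨Set.Iic y, measurableSet_Iic, ?_⟩
      ext ω; simp [not_lt]

lemma meas_card_ge {n : ℕ} (X : Fin n → Ω → ℝ) (hXm : ∀ i, Measurable (X i))
    (hindep : iIndepFun X μ)
    (y : ℝ) (p : ℝ≥0∞) (hp : ∀ i, μ {ω | y < X i ω} = p) (m : ℕ) :
    μ {ω | m ≤ (Finset.univ.filter (fun i => y < X i ω)).card}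
      = ∑ c ∈ Finset.Icc m n, (n.choose c : ℝ≥0∞) * p ^ c * (1 - p) ^ (n - c) := by
  classical
  set T : Ω → Finset (Fin n) := fun ω => Finset.univ.filter (fun i => y < X i ω) with hT
  have hunion : {ω | m ≤ (T ω).card}
      = ⋃ s ∈ ((Finset.univ : Finset (Finset (Fin n))).filter (fun s => m ≤ s.card)),
          {ω | T ω = s} := by
    ext ω
    simp only [Set.mem_setOf_eq, Set.mem_iUnion, Finset.mem_filter, Finset.mem_univ, true_and]
    constructor
    · intro h; exact ⟨T ω, h, rfl⟩
    · rintro ⟨s, hs, rfl⟩; exact hs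
  rw [hunion, measure_biUnion_finset ?_ (fun s _ => measurable_T_eq X hXm y s)]
  · have hval : ∀ s ∈ ((Finset.univ : Finset (Finset (Fin n))).filter (fun s => m ≤ s.card)),
        μ {ω | T ω = s} = p ^ s.card * (1 - p) ^ (n - s.card) :=
      fun s _ => meas_filter_eq X hXm hindep y p hp s
    rw [Finset.sum_congr rfl hval]
    have hsplit : ((Finset.univ : Finset (Finset (Fin n))).filter (fun s => m ≤ s.card))
        = (Finset.Icc m n).biUnion (fun c => Finset.powersetCard c Finset.univ) := by
      ext s
      simp only [Finset.mem_filter, Finset.mem_univ, true_and, Finset.mem_biUnion,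
        Finset.mem_Icc, Finset.mem_powersetCard_univ]
      constructor
      · intro h
        exact ⟨s.card, ⟨h, by simpa using Finset.card_le_univ s⟩, rfl⟩
      · rintro ⟨c, ⟨hc, -⟩, rfl⟩; exact hc
    rw [hsplit, Finset.sum_biUnion ?_]
    · refine Finset.sum_congr rfl fun c hc => ?_
      have : ∀ s ∈ Finset.powersetCard c (Finset.univ : Finset (Fin n)),
          p ^ s.card * (1 - p) ^ (n - s.card) = p ^ c * (1 - p) ^ (n - c) := by
        intro s hs
        rw [Finset.mem_powersetCard_univ] at hs
        rw [hs]
      rw [Finset.sum_congr rfl this, Finset.sum_const, Finset.card_powersetCard]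
      simp [mul_assoc, Finset.card_univ, nsmul_eq_mul]
    · intro a _ b _ hab
      refine Finset.disjoint_left.2 fun s hsa hsb => ?_
      rw [Finset.mem_powersetCard_univ] at hsa hsb
      exact hab (hsa ▸ hsb ▸ rfl)
  · intro a ha b hb hab
    refine Set.disjoint_left.2 fun ω hωa hωb => ?_
    simp only [Set.mem_setOf_eq] at hωa hωb
    exact hab (hωa ▸ hωb ▸ rfl)

end TrimmedHillAux

section TrimmedHillAnalysis


lemma integral_exp_decay {a : ℝ} (ha : 0 < a) :
    ∫ t in Set.Ioi (0:ℝ), Real.exp (-(a * t)) = 1 / a := by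
  have h := integral_comp_mul_left_Ioi (fun x => Real.exp (-x)) 0 ha
  simp only [mul_zero, integral_exp_neg_Ioi, Real.exp_zero, smul_eq_mul, mul_one] at h
  simpa [one_div] using h

lemma choose_expand (K : ℕ) (f : ℕ → ℝ) :
    ∑ r ∈ Finset.range (K + 2), ((K+1).choose r : ℝ) * f r
      = (∑ r ∈ Finset.range (K + 1), (K.choose r : ℝ) * f r)
        + ∑ r ∈ Finset.range (K + 1), (K.choose r : ℝ) * f (r + 1) := by
  rw [Finset.sum_range_succ' (fun r => ((K+1).choose r : ℝ) * f r)]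
  have h1 : ∀ r ∈ Finset.range (K+1), ((K+1).choose (r+1) : ℝ) * f (r+1)
      = (K.choose r : ℝ) * f (r+1) + (K.choose (r+1) : ℝ) * f (r+1) := by
    intro r _
    rw [Nat.choose_succ_succ]
    push_cast
    ring
  rw [Finset.sum_congr rfl h1, Finset.sum_add_distrib]
  have h4 : (∑ r ∈ Finset.range (K+1), (K.choose (r+1) : ℝ) * f (r+1))
      + ((K+1).choose 0 : ℝ) * f 0
      = ∑ r ∈ Finset.range (K+1), (K.choose r : ℝ) * f r := by
    have e := Finset.sum_range_succ' (fun r => (K.choose r : ℝ) * f r) (K+1)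
    rw [Finset.sum_range_succ (fun r => (K.choose r : ℝ) * f r) (K+1)] at e
    simp only [Nat.choose_succ_self, Nat.cast_zero, zero_mul, add_zero] at e
    simp only [Nat.choose_zero_right, Nat.cast_one] at e ⊢
    linarith [e]
  linarith [h4]

lemma beta_sum : ∀ K : ℕ, ∀ x : ℝ, 0 < x →
    ∑ r ∈ Finset.range (K + 1), (-1 : ℝ) ^ r * (K.choose r) * (1 / (x + r))
      = (K.factorial : ℝ) / ∏ i ∈ Finset.range (K + 1), (x + i) := by
  intro K
  induction K with
  | zero => intro x hx; simp
  | succ K ih =>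
    intro x hx
    have hP : ∀ (y : ℝ), 0 < y → (0:ℝ) < ∏ i ∈ Finset.range (K + 1), (y + i) := by
      intro y hy
      exact Finset.prod_pos fun i _ => by positivity
    have key : ∑ r ∈ Finset.range (K + 2), (-1 : ℝ) ^ r * ((K+1).choose r) * (1 / (x + r))
        = (∑ r ∈ Finset.range (K + 1), (-1 : ℝ) ^ r * (K.choose r) * (1 / (x + r)))
          - ∑ r ∈ Finset.range (K + 1), (-1 : ℝ) ^ r * (K.choose r) * (1 / ((x+1) + r)) := by
      have e := choose_expand K (fun r => (-1 : ℝ) ^ r * (1 / (x + r)))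
      have e1 : ∀ g : ℕ → ℝ, ∀ M : ℕ, ∑ r ∈ Finset.range M, (-1:ℝ)^r * (g r) * (1/(x+r))
          = ∑ r ∈ Finset.range M, (g r) * ((-1:ℝ)^r * (1/(x+r))) :=
        fun g M => Finset.sum_congr rfl fun r _ => by ring
      rw [e1 (fun r => ((K+1).choose r : ℝ)) (K+2), e]
      rw [e1 (fun r => (K.choose r : ℝ)) (K+1)]
      rw [sub_eq_add_neg, ← Finset.sum_neg_distrib]
      congr 1
      refine Finset.sum_congr rfl fun r _ => ?_
      push_cast
      ring
    rw [key, ih x hx, ih (x+1) (by linarith)]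
    have h1 : ∏ i ∈ Finset.range (K+2), (x+(i:ℝ))
        = (∏ i ∈ Finset.range (K+1), (x+(i:ℝ))) * (x + K + 1) := by
      rw [Finset.prod_range_succ]
      push_cast
      ring
    have h2 : ∏ i ∈ Finset.range (K+2), (x+(i:ℝ)) = x * ∏ i ∈ Finset.range (K+1), (x+1+(i:ℝ)) := by
      rw [Finset.prod_range_succ' (fun i => x + (i:ℝ))]
      simp only [Nat.cast_zero, add_zero]
      rw [mul_comm]
      congr 1
      refine Finset.prod_congr rfl fun i _ => ?_
      push_cast
      ring
    have ha := hP x hx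
    have hb := hP (x+1) (by linarith)
    have hab : x * ∏ i ∈ Finset.range (K+1), (x+1+(i:ℝ))
        = (∏ i ∈ Finset.range (K+1), (x+(i:ℝ))) * (x + K + 1) := by rw [← h2, h1]
    rw [show K + 1 + 1 = K + 2 from rfl, h1, Nat.factorial_succ]
    push_cast
    rw [div_sub_div _ _ ha.ne' hb.ne', div_eq_div_iff (mul_ne_zero ha.ne' hb.ne')
      (mul_pos ha (by positivity)).ne']
    linear_combination ((K.factorial : ℝ) * (∏ i ∈ Finset.range (K+1), (x + (i:ℝ)))) * hab

lemma prod_shift (d : ℕ) : ∀ K : ℕ,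
    (d.factorial : ℝ) * ∏ i ∈ Finset.range (K+1), ((d:ℝ)+1+i) = ((d+1+K).factorial : ℝ) := by
  intro K
  induction K with
  | zero =>
    simp only [Nat.zero_add, Finset.prod_range_one, Nat.cast_zero, add_zero, Nat.factorial_succ]
    push_cast
    ring
  | succ K ih =>
    rw [Finset.prod_range_succ, ← mul_assoc, ih,
      show d+1+(K+1) = (d+1+K)+1 by ring, Nat.factorial_succ]
    push_cast
    ring

lemma coeff_value (n c : ℕ) (hc1 : 1 ≤ c) (hcn : c ≤ n) :
    (n.choose c : ℝ) * ((n-c).factorial / ∏ i ∈ Finset.range (n-c+1), ((c:ℝ)+i)) = 1/c := by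
  obtain ⟨d, rfl⟩ : ∃ d, c = d + 1 := ⟨c - 1, by omega⟩
  set K := n - (d+1) with hK
  have hprod : ∏ i ∈ Finset.range (K+1), (((d:ℝ)+1)+i)
      = ((d+1+K).factorial : ℝ) / (d.factorial : ℝ) := by
    rw [← prod_shift d K]
    field_simp
  have hn : d + 1 + K = n := by omega
  rw [show ((d+1:ℕ):ℝ) = (d:ℝ)+1 by push_cast; ring] at *
  rw [hprod, hn]
  have hid := Nat.choose_mul_factorial_mul_factorial hcn
  have hfacc : ((d+1).factorial : ℝ) = ((d:ℝ)+1) * d.factorial := by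
    rw [Nat.factorial_succ]; push_cast; ring
  have hne : ∀ m : ℕ, (m.factorial : ℝ) ≠ 0 := fun m => Nat.cast_ne_zero.2 (Nat.factorial_ne_zero m)
  have hcast : (n.choose (d+1) : ℝ) * ((d+1).factorial : ℝ) * (K.factorial : ℝ)
      = (n.factorial : ℝ) := by
    rw [← Nat.cast_mul, ← Nat.cast_mul, hid]
  have hd1 : ((d:ℝ)+1) ≠ 0 := by positivity
  field_simp
  rw [← hcast, hfacc]
  ring

lemma expand_pointwise {ξ : ℝ} (hξ : 0 < ξ) (c K : ℕ) (t : ℝ) :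
    Real.exp (-(t/ξ))^c * (1 - Real.exp (-(t/ξ)))^K
      = ∑ r ∈ Finset.range (K+1),
          (-1:ℝ)^r * (K.choose r) * Real.exp (-(((c:ℝ)+r)/ξ * t)) := by
  have hb : (1 - Real.exp (-(t/ξ)))^K
      = ∑ r ∈ Finset.range (K+1),
          (-Real.exp (-(t/ξ)))^r * 1^(K-r) * (K.choose r) := by
    rw [show (1 : ℝ) - Real.exp (-(t/ξ)) = -Real.exp (-(t/ξ)) + 1 by ring, add_pow]
  rw [hb, Finset.mul_sum]
  refine Finset.sum_congr rfl fun r hr => ?_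
  rw [Finset.mem_range] at hr
  have he : Real.exp (-(t/ξ))^c * Real.exp (-(t/ξ))^r = Real.exp (-(((c:ℝ)+r)/ξ * t)) := by
    rw [← Real.exp_nat_mul, ← Real.exp_nat_mul, ← Real.exp_add]
    congr 1
    field_simp
    ring
  calc Real.exp (-(t/ξ))^c * ((-Real.exp (-(t/ξ)))^r * 1^(K-r) * (K.choose r))
      = (-1:ℝ)^r * (K.choose r) * (Real.exp (-(t/ξ))^c * Real.exp (-(t/ξ))^r) := by
        rw [neg_pow]
        ring
    _ = _ := by rw [he]

set_option maxHeartbeats 1000000 in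
lemma J_value {ξ : ℝ} (hξ : 0 < ξ) (c K : ℕ) (hc : 0 < c) :
    MeasureTheory.IntegrableOn
        (fun t => Real.exp (-(t/ξ))^c * (1 - Real.exp (-(t/ξ)))^K) (Set.Ioi 0) volume ∧
    ∫ t in Set.Ioi (0:ℝ), Real.exp (-(t/ξ))^c * (1 - Real.exp (-(t/ξ)))^K
      = ξ * ((K.factorial : ℝ) / ∏ i ∈ Finset.range (K+1), ((c:ℝ) + i)) := by
  have hfun : (fun t => Real.exp (-(t/ξ))^c * (1 - Real.exp (-(t/ξ)))^K)
      = fun t => ∑ r ∈ Finset.range (K+1),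
          (-1:ℝ)^r * (K.choose r) * Real.exp (-(((c:ℝ)+r)/ξ * t)) :=
    funext fun t => expand_pointwise hξ c K t
  have hint : ∀ r ∈ Finset.range (K+1),
      MeasureTheory.IntegrableOn
        (fun t => (-1:ℝ)^r * (K.choose r) * Real.exp (-(((c:ℝ)+r)/ξ * t)))
        (Set.Ioi 0) volume := by
    intro r _
    have hb : 0 < ((c:ℝ)+r)/ξ := by positivity
    have h2 := (exp_neg_integrableOn_Ioi 0 hb).const_mul ((-1:ℝ)^r * (K.choose r))
    simp only [neg_mul] at h2
    exact h2
  constructor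
  · rw [hfun]
    exact MeasureTheory.integrable_finset_sum _ hint
  · rw [hfun, MeasureTheory.integral_finset_sum _ hint]
    have hterm : ∀ r ∈ Finset.range (K+1),
        ∫ t in Set.Ioi (0:ℝ), (-1:ℝ)^r * (K.choose r) * Real.exp (-(((c:ℝ)+r)/ξ * t))
          = (-1:ℝ)^r * (K.choose r) * (ξ * (1/((c:ℝ)+r))) := by
      intro r _
      rw [MeasureTheory.integral_const_mul, integral_exp_decay (by positivity)]
      congr 1
      rw [one_div_div]
      field_simp
    rw [Finset.sum_congr rfl hterm]
    have := beta_sum K (c:ℝ) (by exact_mod_cast hc)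
    calc ∑ r ∈ Finset.range (K+1), (-1:ℝ)^r * (K.choose r) * (ξ * (1/((c:ℝ)+r)))
        = ξ * ∑ r ∈ Finset.range (K+1), (-1:ℝ)^r * (K.choose r) * (1/((c:ℝ)+r)) := by
          rw [Finset.mul_sum]
          exact Finset.sum_congr rfl fun r _ => by ring
      _ = _ := by rw [this]

end TrimmedHillAnalysis


lemma alg_id (k₀ : ℕ) : ∀ k : ℕ, k₀ < k →
    ((k₀:ℝ)+1) * (∑ m ∈ Finset.Ico (k₀+1) (k+1), (1/(m:ℝ)))
      + ∑ i ∈ Finset.Ico (k₀+1) k, (∑ m ∈ Finset.Ico (i+1) (k+1), (1/(m:ℝ)))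
      = (k:ℝ) - k₀ := by
  intro k
  induction k with
  | zero => omega
  | succ k ih =>
    intro hk
    rcases Nat.lt_or_ge k₀ k with hlt | hge
    · have hIH := ih hlt
      have htop : ∀ a : ℕ, a ≤ k + 1 →
          ∑ m ∈ Finset.Ico a (k+1+1), (1/(m:ℝ))
            = (∑ m ∈ Finset.Ico a (k+1), (1/(m:ℝ))) + 1/((k:ℝ)+1) := by
        intro a ha
        rw [Finset.sum_Ico_succ_top ha]
        push_cast
        ring
      have houter : ∑ i ∈ Finset.Ico (k₀+1) (k+1), (∑ m ∈ Finset.Ico (i+1) (k+1+1), (1/(m:ℝ)))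
          = (∑ i ∈ Finset.Ico (k₀+1) k, (∑ m ∈ Finset.Ico (i+1) (k+1+1), (1/(m:ℝ))))
            + ∑ m ∈ Finset.Ico (k+1) (k+1+1), (1/(m:ℝ)) :=
        Finset.sum_Ico_succ_top (by omega) _
      have hsum : ∑ i ∈ Finset.Ico (k₀+1) k, (∑ m ∈ Finset.Ico (i+1) (k+1+1), (1/(m:ℝ)))
          = (∑ i ∈ Finset.Ico (k₀+1) k, (∑ m ∈ Finset.Ico (i+1) (k+1), (1/(m:ℝ))))
            + ((k:ℝ) - (k₀+1)) * (1/((k:ℝ)+1)) := by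
        have : ∀ i ∈ Finset.Ico (k₀+1) k,
            ∑ m ∈ Finset.Ico (i+1) (k+1+1), (1/(m:ℝ))
              = (∑ m ∈ Finset.Ico (i+1) (k+1), (1/(m:ℝ))) + 1/((k:ℝ)+1) := by
          intro i hi
          rw [Finset.mem_Ico] at hi
          exact htop (i+1) (by omega)
        rw [Finset.sum_congr rfl this, Finset.sum_add_distrib, Finset.sum_const,
          Nat.card_Ico, nsmul_eq_mul]
        push_cast [Nat.cast_sub (by omega : k₀ + 1 ≤ k)]
        ring
      have hlast : ∑ m ∈ Finset.Ico (k+1) (k+1+1), (1/(m:ℝ)) = 1/((k:ℝ)+1) := by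
        rw [Finset.sum_Ico_succ_top (by omega),
          Finset.Ico_self, Finset.sum_empty]
        push_cast
        ring
      rw [houter, hsum, hlast, htop (k₀+1) (by omega)]
      have hk1 : ((k:ℝ)+1) ≠ 0 := by positivity
      push_cast at hIH ⊢
      field_simp at hIH ⊢
      nlinarith [hIH]
    · have hk0 : k₀ = k := by omega
      subst hk0
      simp only [Finset.Ico_self, Finset.sum_empty, add_zero]
      rw [Finset.sum_Ico_succ_top (by omega),
        Finset.Ico_self, Finset.sum_empty]
      have : ((k₀:ℝ)+1) ≠ 0 := by positivity
      push_cast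
      field_simp
      ring


section TrimmedHillMoment
variable {Ω : Type*} [MeasurableSpace Ω] {μ : Measure Ω} [IsProbabilityMeasure μ]


lemma measurable_card_ge {n : ℕ} (X : Fin n → Ω → ℝ) (hXm : ∀ i, Measurable (X i))
    (y : ℝ) (m : ℕ) :
    MeasurableSet {ω | m ≤ (Finset.univ.filter (fun i => y < X i ω)).card} := by
  have hunion : {ω | m ≤ (Finset.univ.filter (fun i => y < X i ω)).card}
      = ⋃ s ∈ ((Finset.univ : Finset (Finset (Fin n))).filter (fun s => m ≤ s.card)),
          {ω | Finset.univ.filter (fun i => y < X i ω) = s} := by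
    ext ω
    simp only [Set.mem_setOf_eq, Set.mem_iUnion, Finset.mem_filter, Finset.mem_univ, true_and]
    exact ⟨fun h => ⟨_, h, rfl⟩, fun ⟨s, hs, h⟩ => h ▸ hs⟩
  rw [hunion]
  exact MeasurableSet.biUnion (Finset.countable_toSet _)
    (fun s _ => measurable_T_eq X hXm y s)

lemma log_Y_moment (ξ : ℝ) (hξ : 0 < ξ) {n : ℕ}
    (X : Fin n → Ω → ℝ) (hXm : ∀ i, Measurable (X i))
    (hindep : iIndepFun X μ)
    (hpareto : ∀ i, ∀ x : ℝ, 1 ≤ x → μ {ω | x < X i ω} = ENNReal.ofReal (x ^ (-1 / ξ)))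
    (hpareto1 : ∀ i, ∀ x : ℝ, x < 1 → μ {ω | x < X i ω} = 1)
    (Y : Fin n → Ω → ℝ)
    (hperm : ∀ ω, ∃ σ : Equiv.Perm (Fin n), ∀ i, Y i ω = X (σ i) ω)
    (hsorted : ∀ ω, ∀ i j : Fin n, i ≤ j → Y j ω ≤ Y i ω)
    (j : Fin n) :
    Integrable (fun ω => Real.log (Y j ω)) μ ∧
    ∫ ω, Real.log (Y j ω) ∂μ = ξ * ∑ c ∈ Finset.Icc ((j:ℕ)+1) n, (1/(c:ℝ)) := by
  -- measurability of Y j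
  have hYmeas : Measurable (Y j) := by
    apply measurable_of_Ioi
    intro y
    have hset : Y j ⁻¹' (Set.Ioi y)
        = {ω | (j:ℕ)+1 ≤ (Finset.univ.filter (fun i => y < X i ω)).card} := by
      ext ω
      simp only [Set.mem_preimage, Set.mem_Ioi, Set.mem_setOf_eq]
      exact order_stat_gt_iff X Y hperm hsorted ω y j
    rw [hset]
    exact measurable_card_ge X hXm y _
  -- a.e. 1 ≤ X i
  have hae : ∀ᵐ ω ∂μ, ∀ i, 1 ≤ X i ω := by
    rw [ae_all_iff]
    intro i
    have hsub : {ω | ¬ 1 ≤ X i ω} ⊆ ⋃ m : ℕ, {ω | X i ω ≤ 1 - 1/(m+1)} := by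
      intro ω hω
      simp only [Set.mem_setOf_eq, not_le] at hω
      obtain ⟨m, hm⟩ := exists_nat_one_div_lt (sub_pos.2 hω)
      exact Set.mem_iUnion.2 ⟨m, by simp only [Set.mem_setOf_eq]; linarith⟩
    refine measure_mono_null hsub (measure_iUnion_null fun m => ?_)
    have h1 : {ω | X i ω ≤ 1 - 1/((m:ℝ)+1)} = {ω | (1 - 1/((m:ℝ)+1)) < X i ω}ᶜ := by
      ext ω; simp [not_lt]
    rw [h1, prob_compl_eq_one_sub (measurableSet_lt measurable_const (hXm i)),
      hpareto1 i _ (by nlinarith [one_div_pos.2 (show (0:ℝ) < (m:ℝ)+1 by positivity)])]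
    simp
  have haeY : ∀ᵐ ω ∂μ, ∀ i : Fin n, 1 ≤ Y i ω := by
    filter_upwards [hae] with ω h i
    obtain ⟨σ, hσ⟩ := hperm ω
    rw [hσ i]
    exact h _
  have f_nn : (0 : Ω → ℝ) ≤ᵐ[μ] fun ω => Real.log (Y j ω) := by
    filter_upwards [haeY] with ω h
    exact Real.log_nonneg (h j)
  have key := lintegral_eq_lintegral_meas_lt μ f_nn
    ((Real.measurable_log.comp hYmeas).aemeasurable)
  have hdist : ∀ t : ℝ, t ∈ Set.Ioi (0:ℝ) →
      μ {a | t < Real.log (Y j a)}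
        = ∑ c ∈ Finset.Icc ((j:ℕ)+1) n,
            ENNReal.ofReal ((n.choose c : ℝ)
              * (Real.exp (-(t/ξ))^c * (1 - Real.exp (-(t/ξ)))^(n-c))) := by
    intro t ht
    rw [Set.mem_Ioi] at ht
    have hcong : {a | t < Real.log (Y j a)} =ᵐ[μ] {a | Real.exp t < Y j a} := by
      filter_upwards [haeY] with ω hω
      simp only [Set.mem_setOf_eq, eq_iff_iff]
      exact Real.lt_log_iff_exp_lt (by linarith [hω j])
    rw [measure_congr hcong]
    have hset : {a | Real.exp t < Y j a}
        = {ω | (j:ℕ)+1 ≤ (Finset.univ.filter (fun i => Real.exp t < X i ω)).card} := by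
      ext ω
      simp only [Set.mem_setOf_eq]
      exact order_stat_gt_iff X Y hperm hsorted ω _ j
    rw [hset]
    have hq : ∀ i, μ {ω | Real.exp t < X i ω} = ENNReal.ofReal (Real.exp (-(t/ξ))) := by
      intro i
      rw [hpareto i _ (Real.one_le_exp ht.le)]
      congr 1
      rw [Real.rpow_def_of_pos (Real.exp_pos t), Real.log_exp]
      congr 1
      ring
    rw [meas_card_ge X hXm hindep _ _ hq]
    refine Finset.sum_congr rfl fun c hc => ?_
    have hq0 : (0:ℝ) ≤ Real.exp (-(t/ξ)) := (Real.exp_pos _).le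
    have hq1 : Real.exp (-(t/ξ)) ≤ 1 :=
      Real.exp_le_one_iff.2 (neg_nonpos.2 (div_nonneg ht.le hξ.le))
    have h1q : ENNReal.ofReal (1 - Real.exp (-(t/ξ)))
        = 1 - ENNReal.ofReal (Real.exp (-(t/ξ))) := by
      rw [ENNReal.ofReal_sub _ hq0, ENNReal.ofReal_one]
    rw [ENNReal.ofReal_mul (Nat.cast_nonneg _), ENNReal.ofReal_mul (pow_nonneg hq0 c),
      ENNReal.ofReal_pow hq0, ENNReal.ofReal_pow (by linarith), h1q,
      ENNReal.ofReal_natCast, mul_assoc]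
  have hmeasg : ∀ c : ℕ, Measurable (fun t : ℝ =>
      ENNReal.ofReal ((n.choose c : ℝ)
        * (Real.exp (-(t/ξ))^c * (1 - Real.exp (-(t/ξ)))^(n-c)))) := by
    intro c
    have hm : Measurable fun t : ℝ => Real.exp (-(t/ξ)) :=
      Real.measurable_exp.comp ((measurable_id.div_const ξ).neg)
    exact (((hm.pow_const c).mul ((measurable_const.sub hm).pow_const (n-c))).const_mul
      _).ennreal_ofReal
  have hlint : ∫⁻ ω, ENNReal.ofReal (Real.log (Y j ω)) ∂μ
      = ENNReal.ofReal (ξ * ∑ c ∈ Finset.Icc ((j:ℕ)+1) n, (1/(c:ℝ))) := by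
    rw [key, setLIntegral_congr_fun measurableSet_Ioi hdist,
      lintegral_finset_sum _ (fun c _ => hmeasg c)]
    have hterm : ∀ c ∈ Finset.Icc ((j:ℕ)+1) n,
        ∫⁻ t in Set.Ioi (0:ℝ), ENNReal.ofReal ((n.choose c : ℝ)
            * (Real.exp (-(t/ξ))^c * (1 - Real.exp (-(t/ξ)))^(n-c)))
          = ENNReal.ofReal (ξ * (1/(c:ℝ))) := by
      intro c hc
      rw [Finset.mem_Icc] at hc
      have hcpos : 0 < c := by omega
      have hInt : MeasureTheory.IntegrableOn (fun t => (n.choose c : ℝ)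
          * (Real.exp (-(t/ξ))^c * (1 - Real.exp (-(t/ξ)))^(n-c))) (Set.Ioi 0) volume :=
        ((J_value hξ c (n-c) hcpos).1).const_mul _
      have hnn : (0 : ℝ → ℝ) ≤ᵐ[volume.restrict (Set.Ioi 0)] fun t => (n.choose c : ℝ)
          * (Real.exp (-(t/ξ))^c * (1 - Real.exp (-(t/ξ)))^(n-c)) := by
        refine (ae_restrict_iff' measurableSet_Ioi).2 (ae_of_all _ fun t ht => ?_)
        rw [Set.mem_Ioi] at ht
        have hq1 : Real.exp (-(t/ξ)) ≤ 1 :=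
          Real.exp_le_one_iff.2 (neg_nonpos.2 (div_nonneg ht.le hξ.le))
        have hq0 : (0:ℝ) ≤ Real.exp (-(t/ξ)) := (Real.exp_pos _).le
        exact mul_nonneg (Nat.cast_nonneg _)
          (mul_nonneg (pow_nonneg hq0 c) (pow_nonneg (by linarith) _))
      rw [← ofReal_integral_eq_lintegral_ofReal hInt hnn]
      congr 1
      rw [MeasureTheory.integral_const_mul, (J_value hξ c (n-c) hcpos).2]
      have hcv := coeff_value n c hcpos hc.2
      calc (n.choose c : ℝ) * (ξ * ((n-c).factorial / ∏ i ∈ Finset.range (n-c+1), ((c:ℝ) + i)))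
          = ξ * ((n.choose c : ℝ)
              * ((n-c).factorial / ∏ i ∈ Finset.range (n-c+1), ((c:ℝ) + i))) := by ring
        _ = ξ * (1/(c:ℝ)) := by rw [hcv]
    rw [Finset.sum_congr rfl hterm, ← ENNReal.ofReal_sum_of_nonneg
      (fun c hc => by positivity), Finset.mul_sum]
  have hIntlog : Integrable (fun ω => Real.log (Y j ω)) μ := by
    refine ⟨(Real.measurable_log.comp hYmeas).aestronglyMeasurable, ?_⟩
    rw [hasFiniteIntegral_iff_norm]
    have heq : ∫⁻ ω, ENNReal.ofReal ‖Real.log (Y j ω)‖ ∂μ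
        = ∫⁻ ω, ENNReal.ofReal (Real.log (Y j ω)) ∂μ := by
      refine lintegral_congr_ae ?_
      filter_upwards [f_nn] with ω h
      rw [Real.norm_eq_abs, abs_of_nonneg h]
    rw [heq, hlint]
    exact ENNReal.ofReal_lt_top
  refine ⟨hIntlog, ?_⟩
  rw [integral_eq_lintegral_of_nonneg_ae f_nn
    (Real.measurable_log.comp hYmeas).aestronglyMeasurable, hlint,
    ENNReal.toReal_ofReal (mul_nonneg hξ.le (Finset.sum_nonneg fun c _ => by positivity))]

end TrimmedHillMoment


/-- For an i.i.d. sample `X₁, …, Xₙ` from a Pareto distribution with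
`P(Xᵢ > x) = x^{-1/ξ}` for `x ≥ 1` and decreasing order statistics
`Y 0 ≥ Y 1 ≥ … ≥ Y (n-1)` (so `X^{(j,n)} = Y (j-1)`), the optimally weighted trimmed
Hill estimator
`ξ̂ = ((k₀+1)/(k-k₀)) ln(X^{(k₀+1,n)}/X^{(k+1,n)}) + (1/(k-k₀)) Σ_{i=k₀+2}^{k} ln(X^{(i,n)}/X^{(k+1,n)})`
is unbiased for `ξ`, for all `0 ≤ k₀ < k < n-1`. -/
theorem trimmed_hill_estimator_unbiased
    {Ω : Type*} [MeasurableSpace Ω] (μ : Measure Ω) [IsProbabilityMeasure μ]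
    (ξ : ℝ) (hξ : 0 < ξ) (n : ℕ)
    (X : Fin n → Ω → ℝ) (hXm : ∀ i, Measurable (X i))
    (hindep : iIndepFun X μ)
    (hpareto : ∀ i, ∀ x : ℝ, 1 ≤ x → μ {ω | x < X i ω} = ENNReal.ofReal (x ^ (-1 / ξ)))
    (hpareto1 : ∀ i, ∀ x : ℝ, x < 1 → μ {ω | x < X i ω} = 1)
    (Y : Fin n → Ω → ℝ)
    (hperm : ∀ ω, ∃ σ : Equiv.Perm (Fin n), ∀ i, Y i ω = X (σ i) ω)
    (hsorted : ∀ ω, ∀ i j : Fin n, i ≤ j → Y j ω ≤ Y i ω)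
    (k₀ k : ℕ) (hk₀ : k₀ < k) (hk : k < n - 1) :
    ∫ ω,
        (((k₀ : ℝ) + 1) / ((k : ℝ) - (k₀ : ℝ))
            * Real.log (Y ⟨k₀, by omega⟩ ω / Y ⟨k, by omega⟩ ω)
          + (1 / ((k : ℝ) - (k₀ : ℝ)))
            * ∑ i ∈ Finset.Ico (k₀ + 1) k,
                Real.log (Y ⟨i % n, Nat.mod_lt i (by omega)⟩ ω / Y ⟨k, by omega⟩ ω)) ∂μ
      = ξ := by
  have hn : k < n - 1 := hk
  have hnn : 0 < n := by omega
  have hmom := fun j : Fin n => log_Y_moment ξ hξ X hXm hindep hpareto hpareto1 Y hperm hsorted j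
  have hInt : ∀ j : Fin n, Integrable (fun ω => Real.log (Y j ω)) μ := fun j => (hmom j).1
  -- a.e. positivity
  have hae : ∀ᵐ ω ∂μ, ∀ i, 1 ≤ X i ω := by
    rw [ae_all_iff]
    intro i
    have hsub : {ω | ¬ 1 ≤ X i ω} ⊆ ⋃ m : ℕ, {ω | X i ω ≤ 1 - 1/(m+1)} := by
      intro ω hω
      simp only [Set.mem_setOf_eq, not_le] at hω
      obtain ⟨m, hm⟩ := exists_nat_one_div_lt (sub_pos.2 hω)
      exact Set.mem_iUnion.2 ⟨m, by simp only [Set.mem_setOf_eq]; linarith⟩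
    refine measure_mono_null hsub (measure_iUnion_null fun m => ?_)
    have h1 : {ω | X i ω ≤ 1 - 1/((m:ℝ)+1)} = {ω | (1 - 1/((m:ℝ)+1)) < X i ω}ᶜ := by
      ext ω; simp [not_lt]
    rw [h1, prob_compl_eq_one_sub (measurableSet_lt measurable_const (hXm i)),
      hpareto1 i _ (by nlinarith [one_div_pos.2 (show (0:ℝ) < (m:ℝ)+1 by positivity)])]
    simp
  have haeY : ∀ᵐ ω ∂μ, ∀ i : Fin n, 1 ≤ Y i ω := by
    filter_upwards [hae] with ω h i
    obtain ⟨σ, hσ⟩ := hperm ω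
    rw [hσ i]
    exact h _
  -- rewrite integrand a.e.
  set c1 : ℝ := ((k₀ : ℝ) + 1) / ((k : ℝ) - (k₀ : ℝ)) with hc1
  set c2 : ℝ := 1 / ((k : ℝ) - (k₀ : ℝ)) with hc2
  set F : Ω → ℝ := fun ω =>
    c1 * (Real.log (Y ⟨k₀, by omega⟩ ω) - Real.log (Y ⟨k, by omega⟩ ω))
      + c2 * ∑ i ∈ Finset.Ico (k₀ + 1) k,
          (Real.log (Y ⟨i % n, Nat.mod_lt i (by omega)⟩ ω)
            - Real.log (Y ⟨k, by omega⟩ ω)) with hF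
  have hcongr : ∫ ω,
        (c1 * Real.log (Y ⟨k₀, by omega⟩ ω / Y ⟨k, by omega⟩ ω)
          + c2 * ∑ i ∈ Finset.Ico (k₀ + 1) k,
              Real.log (Y ⟨i % n, Nat.mod_lt i (by omega)⟩ ω / Y ⟨k, by omega⟩ ω)) ∂μ
      = ∫ ω, F ω ∂μ := by
    refine integral_congr_ae ?_
    filter_upwards [haeY] with ω hω
    have hpos : ∀ i : Fin n, Y i ω ≠ 0 := fun i => ne_of_gt (lt_of_lt_of_le one_pos (hω i))
    rw [hF]
    simp only []
    rw [Real.log_div (hpos _) (hpos _)]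
    congr 1
    congr 1
    exact Finset.sum_congr rfl fun i _ => Real.log_div (hpos _) (hpos _)
  rw [hcongr]
  -- integrability of pieces
  have h1 : Integrable (fun ω =>
      Real.log (Y ⟨k₀, by omega⟩ ω) - Real.log (Y ⟨k, by omega⟩ ω)) μ :=
    (hInt _).sub (hInt _)
  have h2 : Integrable (fun ω => ∑ i ∈ Finset.Ico (k₀ + 1) k,
      (Real.log (Y ⟨i % n, Nat.mod_lt i (by omega)⟩ ω)
        - Real.log (Y ⟨k, by omega⟩ ω))) μ :=
    integrable_finset_sum _ (fun i _ => (hInt _).sub (hInt _))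
  rw [hF]
  simp only []
  have h3 : ∀ i ∈ Finset.Ico (k₀ + 1) k, Integrable (fun ω =>
      Real.log (Y ⟨i % n, Nat.mod_lt i (by omega)⟩ ω)
        - Real.log (Y ⟨k, by omega⟩ ω)) μ := fun i _ => (hInt _).sub (hInt _)
  rw [integral_add (h1.const_mul c1) (h2.const_mul c2), integral_const_mul, integral_const_mul,
    integral_sub (hInt _) (hInt _), integral_finset_sum _ h3]
  -- values
  have hval : ∀ j : Fin n, ∫ ω, Real.log (Y j ω) ∂μ
      = ξ * ∑ c ∈ Finset.Icc ((j:ℕ)+1) n, (1/(c:ℝ)) := fun j => (hmom j).2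
  have hsum_val : ∀ i ∈ Finset.Ico (k₀ + 1) k,
      ∫ ω, (Real.log (Y ⟨i % n, Nat.mod_lt i (by omega)⟩ ω)
        - Real.log (Y ⟨k, by omega⟩ ω)) ∂μ
      = ξ * ∑ m ∈ Finset.Ico (i+1) (k+1), (1/(m:ℝ)) := by
    intro i hi
    rw [Finset.mem_Ico] at hi
    have himod : i % n = i := Nat.mod_eq_of_lt (by omega)
    rw [integral_sub (hInt _) (hInt _), hval, hval]
    simp only [himod]
    -- ξ * H(i+1) - ξ * H(k+1) = ξ * S(i+1)
    have hsplit : ∑ c ∈ Finset.Icc (i+1) n, (1/(c:ℝ))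
        = (∑ m ∈ Finset.Ico (i+1) (k+1), (1/(m:ℝ)))
          + ∑ c ∈ Finset.Icc (k+1) n, (1/(c:ℝ)) := by
      rw [← Finset.Ico_add_one_right_eq_Icc (i+1) n, ← Finset.Ico_add_one_right_eq_Icc (k+1) n,
        Finset.sum_Ico_consecutive _ (by omega : i+1 ≤ k+1) (by omega : k+1 ≤ n+1)]
    rw [hsplit]
    ring
  rw [Finset.sum_congr rfl hsum_val, hval, hval]
  simp only [Fin.val_mk]
  have hsplit0 : ∑ c ∈ Finset.Icc (k₀+1) n, (1/(c:ℝ))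
      = (∑ m ∈ Finset.Ico (k₀+1) (k+1), (1/(m:ℝ)))
        + ∑ c ∈ Finset.Icc (k+1) n, (1/(c:ℝ)) := by
    rw [← Finset.Ico_add_one_right_eq_Icc (k₀+1) n, ← Finset.Ico_add_one_right_eq_Icc (k+1) n,
      Finset.sum_Ico_consecutive _ (by omega : k₀+1 ≤ k+1) (by omega : k+1 ≤ n+1)]
  rw [hsplit0]
  have halg := alg_id k₀ k hk₀
  have hne : (k:ℝ) - (k₀:ℝ) ≠ 0 := by
    have : (k₀:ℝ) < (k:ℝ) := by exact_mod_cast hk₀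
    linarith
  rw [hc1, hc2, ← Finset.mul_sum]
  field_simp
  linear_combination halg
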